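/- For all positive integers p and q there exists a constant β_m > 0, depending only on p and q, such that for every matrix ellipsoid ℰ ⊆ ℝ^{p×q} with parameters (E, F, G), the Lebesgue measure of the vectorized set 𝒱(ℰ) := {vec(Z) : Z ∈ ℰ} ⊆ ℝ^{pq} equals β_m · (det(F⊤E^{−1}F − G))^{p/2} · (det(E^{−1}))^{q/2}; in particular every matrix ellipsoid is measurable in this sense. -/

import Mathlib

open Matrix MeasureTheory Pointwise

/-- Column-stacking vectorization: `vecMat Z (i + p*j) = Z i j`. -/
def vecMat {p q : ℕ} (Z : Matrix (Fin p) (Fin q) ℝ) : Fin (p * q) → ℝ :=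
  fun k =>
    have hp : 0 < p := by
      rcases Nat.eq_zero_or_pos p with hp0 | hp0
      · exact absurd k.isLt (by simp [hp0])
      · exact hp0
    Z ⟨(k : ℕ) % p, Nat.mod_lt _ hp⟩
      ⟨(k : ℕ) / p, by
        rw [Nat.div_lt_iff_lt_mul hp]
        exact lt_of_lt_of_le k.isLt (le_of_eq (Nat.mul_comm p q))⟩

namespace Stmt5Aux

variable {p q : ℕ}

/-- `(i, j) ↦ i + p * j`. -/
def matIdx (p q : ℕ) : Fin p × Fin q ≃ Fin (p * q) :=
  (Equiv.prodComm (Fin p) (Fin q)).trans (finProdFinEquiv.trans (finCongr (Nat.mul_comm q p)))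

lemma matIdx_apply (i : Fin p) (j : Fin q) : ((matIdx p q (i, j) : Fin (p * q)) : ℕ) = i + p * j := rfl

lemma vecMat_matIdx (Z : Matrix (Fin p) (Fin q) ℝ) (i : Fin p) (j : Fin q) :
    vecMat Z (matIdx p q (i, j)) = Z i j := by
  have hp : 0 < p := i.pos
  simp only [vecMat]
  congr 2
  · rw [matIdx_apply, Nat.add_mul_mod_self_left, Nat.mod_eq_of_lt i.isLt]
  · rw [matIdx_apply, Nat.add_mul_div_left _ _ hp, Nat.div_eq_of_lt i.isLt, Nat.zero_add]

lemma vecMat_add (Z W : Matrix (Fin p) (Fin q) ℝ) : vecMat (Z + W) = vecMat Z + vecMat W := rfl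

/-- Matrix of the linear map `W ↦ A * W * C` on vectorized matrices. -/
noncomputable def kronMat (A : Matrix (Fin p) (Fin p) ℝ) (C : Matrix (Fin q) (Fin q) ℝ) :
    Matrix (Fin (p * q)) (Fin (p * q)) ℝ :=
  Matrix.reindex (matIdx p q) (matIdx p q) (Matrix.kroneckerMap (· * ·) A Cᵀ)

lemma vecMat_mul_mul (A : Matrix (Fin p) (Fin p) ℝ) (C : Matrix (Fin q) (Fin q) ℝ)
    (W : Matrix (Fin p) (Fin q) ℝ) :
    vecMat (A * W * C) = kronMat A C *ᵥ vecMat W := by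
  funext k
  obtain ⟨⟨i, j⟩, rfl⟩ := (matIdx p q).surjective k
  rw [vecMat_matIdx]
  rw [Matrix.mulVec, dotProduct]
  rw [← Equiv.sum_comp (matIdx p q) (fun k' => kronMat A C (matIdx p q (i, j)) k' * vecMat W k')]
  rw [Fintype.sum_prod_type]
  simp only [kronMat, Matrix.reindex_apply, Matrix.submatrix_apply, Equiv.symm_apply_apply,
    Matrix.kroneckerMap_apply, Matrix.transpose_apply, vecMat_matIdx]
  rw [Matrix.mul_apply]
  simp only [Matrix.mul_apply, Finset.sum_mul]
  rw [Finset.sum_comm]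
  congr 1
  ext a
  congr 1
  ext b
  ring

lemma det_kronMat (A : Matrix (Fin p) (Fin p) ℝ) (C : Matrix (Fin q) (Fin q) ℝ) :
    (kronMat A C).det = A.det ^ q * C.det ^ p := by
  rw [kronMat, Matrix.det_reindex_self]
  rw [Matrix.det_kronecker, Matrix.det_transpose]
  simp


lemma herm_transpose {n : ℕ} {M : Matrix (Fin n) (Fin n) ℝ} (h : M.IsHermitian) : Mᵀ = M := by
  rw [← Matrix.conjTranspose_eq_transpose_of_trivial]; exact h

/-- The "unit ball" of matrices. -/
def mBall (p q : ℕ) : Set (Matrix (Fin p) (Fin q) ℝ) := {W | (1 - Wᵀ * W).PosSemidef}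

lemma quad_form (W : Matrix (Fin p) (Fin q) ℝ) (x : Fin q → ℝ) :
    x ⬝ᵥ ((1 - Wᵀ * W) *ᵥ x) = x ⬝ᵥ x - (W *ᵥ x) ⬝ᵥ (W *ᵥ x) := by
  rw [Matrix.sub_mulVec, dotProduct_sub, Matrix.one_mulVec, ← Matrix.mulVec_mulVec,
    Matrix.dotProduct_mulVec x Wᵀ, Matrix.vecMul_transpose]

lemma herm_one_sub (W : Matrix (Fin p) (Fin q) ℝ) : (1 - Wᵀ * W).IsHermitian := by
  refine Matrix.isHermitian_one.sub ?_
  rw [← Matrix.conjTranspose_eq_transpose_of_trivial]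
  exact Matrix.isHermitian_conjTranspose_mul_self W

lemma mem_mBall_iff (W : Matrix (Fin p) (Fin q) ℝ) :
    W ∈ mBall p q ↔ ∀ x : Fin q → ℝ, (W *ᵥ x) ⬝ᵥ (W *ᵥ x) ≤ x ⬝ᵥ x := by
  constructor
  · intro h x
    have := h.dotProduct_mulVec_nonneg x
    simp only [star_trivial] at this
    rw [quad_form] at this
    linarith
  · intro h
    refine Matrix.PosSemidef.of_dotProduct_mulVec_nonneg (herm_one_sub W) fun x => ?_
    simp only [star_trivial]
    rw [quad_form]
    linarith [h x]

lemma mem_mBall_of_small (hp : 0 < p) (hq : 0 < q) (W : Matrix (Fin p) (Fin q) ℝ)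
    (h : ∀ i j, |W i j| ≤ 1 / ((p : ℝ) * q)) : W ∈ mBall p q := by
  rw [mem_mBall_iff]
  intro x
  set ε : ℝ := 1 / ((p : ℝ) * q) with hε
  have hεpos : 0 < ε := by positivity
  have habs : ∀ i, |(W *ᵥ x) i| ≤ ε * ∑ j, |x j| := by
    intro i
    have hwx : (W *ᵥ x) i = ∑ j, W i j * x j := by simp [Matrix.mulVec, dotProduct]
    rw [hwx]
    calc |∑ j, W i j * x j| ≤ ∑ j, |W i j * x j| := Finset.abs_sum_le_sum_abs _ _
      _ ≤ ∑ j, ε * |x j| := by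
          refine Finset.sum_le_sum fun j _ => ?_
          rw [abs_mul]
          exact mul_le_mul_of_nonneg_right (h i j) (abs_nonneg _)
      _ = ε * ∑ j, |x j| := by rw [Finset.mul_sum]
  have hsq : ∀ i, (W *ᵥ x) i ^ 2 ≤ ε ^ 2 * (∑ j, |x j|) ^ 2 := by
    intro i
    rw [← sq_abs, ← mul_pow]
    exact pow_le_pow_left₀ (abs_nonneg _) (habs i) 2
  have hcs : (∑ j, |x j|) ^ 2 ≤ (q : ℝ) * ∑ j, x j ^ 2 := by
    have := sq_sum_le_card_mul_sum_sq (s := (Finset.univ : Finset (Fin q)))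
      (f := fun j => |x j|)
    simpa [sq_abs] using this
  have h1 : (W *ᵥ x) ⬝ᵥ (W *ᵥ x) = ∑ i, (W *ᵥ x) i ^ 2 := by
    simp [dotProduct, sq]
  have h2 : x ⬝ᵥ x = ∑ j, x j ^ 2 := by simp [dotProduct, sq]
  rw [h1, h2]
  have hsum : ∑ i, (W *ᵥ x) i ^ 2 ≤ (p : ℝ) * (ε ^ 2 * (∑ j, |x j|) ^ 2) := by
    calc ∑ i, (W *ᵥ x) i ^ 2 ≤ ∑ _i : Fin p, ε ^ 2 * (∑ j, |x j|) ^ 2 :=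
          Finset.sum_le_sum fun i _ => hsq i
      _ = (p : ℝ) * (ε ^ 2 * (∑ j, |x j|) ^ 2) := by simp [Finset.sum_const, mul_comm]
  have hkey : (p : ℝ) * (ε ^ 2 * ((q : ℝ) * ∑ j, x j ^ 2)) ≤ ∑ j, x j ^ 2 := by
    have hpq1 : (1 : ℝ) ≤ (p : ℝ) * q := by
      have hp1 : (1:ℝ) ≤ p := by exact_mod_cast hp
      have hq1 : (1:ℝ) ≤ q := by exact_mod_cast hq
      nlinarith
    have hx2 : 0 ≤ ∑ j, x j ^ 2 := Finset.sum_nonneg fun j _ => sq_nonneg _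
    have : (p : ℝ) * (ε ^ 2 * (q : ℝ)) ≤ 1 := by
      have hpq0 : (0:ℝ) < (p : ℝ) * q := by positivity
      have heq : (p : ℝ) * (ε ^ 2 * (q : ℝ)) = ((p:ℝ) * q)⁻¹ := by
        rw [hε]; field_simp
      rw [heq]
      exact inv_le_one_of_one_le₀ hpq1
    calc (p : ℝ) * (ε ^ 2 * ((q : ℝ) * ∑ j, x j ^ 2)) = ((p:ℝ) * (ε^2 * q)) * ∑ j, x j ^ 2 := by ring
      _ ≤ 1 * ∑ j, x j ^ 2 := mul_le_mul_of_nonneg_right this hx2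
      _ = ∑ j, x j ^ 2 := one_mul _
  calc ∑ i, (W *ᵥ x) i ^ 2 ≤ (p : ℝ) * (ε ^ 2 * (∑ j, |x j|) ^ 2) := hsum
    _ ≤ (p : ℝ) * (ε ^ 2 * ((q : ℝ) * ∑ j, x j ^ 2)) := by
        apply mul_le_mul_of_nonneg_left _ (by positivity)
        exact mul_le_mul_of_nonneg_left hcs (by positivity)
    _ ≤ ∑ j, x j ^ 2 := hkey

lemma abs_le_one_of_mem_mBall {W : Matrix (Fin p) (Fin q) ℝ} (h : W ∈ mBall p q)
    (i : Fin p) (j : Fin q) : |W i j| ≤ 1 := by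
  rw [mem_mBall_iff] at h
  have hx := h (Pi.single j 1)
  have hW : W *ᵥ Pi.single j 1 = fun i' => W i' j := by
    funext i'
    simp [Matrix.mulVec_single]
  have h2 : (Pi.single j 1 : Fin q → ℝ) ⬝ᵥ Pi.single j 1 = 1 := by
    simp [dotProduct, Pi.single_apply]
  rw [hW, h2] at hx
  have hsum : (fun i' => W i' j) ⬝ᵥ (fun i' => W i' j) = ∑ i', W i' j ^ 2 := by
    simp [dotProduct, sq]
  rw [hsum] at hx
  have : W i j ^ 2 ≤ 1 := le_trans (Finset.single_le_sum (f := fun i' => W i' j ^ 2)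
    (fun i' _ => sq_nonneg _) (Finset.mem_univ i)) hx
  rw [← sq_abs] at this
  nlinarith [abs_nonneg (W i j)]


lemma cube_subset (hp : 0 < p) (hq : 0 < q) :
    (Set.univ.pi fun _ : Fin (p*q) => Set.Icc (-(1/((p:ℝ)*q))) (1/((p:ℝ)*q)))
      ⊆ vecMat '' mBall p q := by
  intro v hv
  refine ⟨fun i j => v (matIdx p q (i, j)), mem_mBall_of_small hp hq _ ?_, ?_⟩
  · intro i j
    have := hv (matIdx p q (i,j)) (Set.mem_univ _)
    rw [Set.mem_Icc] at this
    exact abs_le.2 this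
  · funext k
    obtain ⟨⟨i,j⟩, rfl⟩ := (matIdx p q).surjective k
    exact vecMat_matIdx _ i j

lemma image_subset_cube :
    vecMat '' mBall p q ⊆ Set.univ.pi fun _ : Fin (p*q) => Set.Icc (-1:ℝ) 1 := by
  rintro v ⟨W, hW, rfl⟩ k _
  obtain ⟨⟨i,j⟩, rfl⟩ := (matIdx p q).surjective k
  rw [vecMat_matIdx]
  exact Set.mem_Icc.2 (abs_le.1 (abs_le_one_of_mem_mBall hW i j))

lemma volume_image_pos (hp : 0 < p) (hq : 0 < q) : 0 < volume (vecMat '' mBall p q) := by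
  refine lt_of_lt_of_le ?_ (measure_mono (cube_subset hp hq))
  rw [volume_pi_pi]
  simp only [Real.volume_Icc]
  rw [Finset.prod_const]
  have h0 : (0:ℝ) < 1/((p:ℝ)*q) - (-(1/((p:ℝ)*q))) := by
    have : (0:ℝ) < 1/((p:ℝ)*q) := by positivity
    linarith
  exact ENNReal.pow_pos (ENNReal.ofReal_pos.2 h0) _

lemma volume_image_lt_top : volume (vecMat '' (mBall p q)) < ⊤ := by
  refine lt_of_le_of_lt (measure_mono image_subset_cube) ?_
  rw [volume_pi_pi]
  simp only [Real.volume_Icc]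
  rw [Finset.prod_const]
  exact ENNReal.pow_lt_top ENNReal.ofReal_lt_top


lemma posSemidef_of_conj {n m : ℕ} {M : Matrix (Fin n) (Fin n) ℝ} (hM : M.PosSemidef)
    (T : Matrix (Fin n) (Fin m) ℝ) : (Tᵀ * M * T).PosSemidef := by
  have := hM.conjTranspose_mul_mul_same T
  rwa [Matrix.conjTranspose_eq_transpose_of_trivial] at this

lemma posSemidef_conj_iff {n : ℕ} (M : Matrix (Fin n) (Fin n) ℝ) {T : Matrix (Fin n) (Fin n) ℝ}
    (hT : IsUnit T.det) : (Tᵀ * M * T).PosSemidef ↔ M.PosSemidef := by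
  constructor
  · intro h
    have h2 := posSemidef_of_conj h T⁻¹
    have e : (T⁻¹)ᵀ * (Tᵀ * M * T) * T⁻¹ = M := by
      rw [show (T⁻¹)ᵀ * (Tᵀ * M * T) * T⁻¹ = ((T⁻¹)ᵀ * Tᵀ) * (M * (T * T⁻¹)) by
        simp only [Matrix.mul_assoc]]
      rw [← Matrix.transpose_mul, Matrix.mul_nonsing_inv _ hT, Matrix.transpose_one,
        Matrix.one_mul, Matrix.mul_one]
    rwa [e] at h2
  · intro h
    exact posSemidef_of_conj h T

section MSqrt
open scoped MatrixOrder

/-- Matrix square root. -/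
noncomputable def msqrt {n : ℕ} (M : Matrix (Fin n) (Fin n) ℝ) : Matrix (Fin n) (Fin n) ℝ :=
  CFC.sqrt M

lemma msqrt_herm {n : ℕ} (M : Matrix (Fin n) (Fin n) ℝ) : (msqrt M).IsHermitian :=
  (Matrix.nonneg_iff_posSemidef.mp (CFC.sqrt_nonneg M)).1

lemma msqrt_mul_self {n : ℕ} {M : Matrix (Fin n) (Fin n) ℝ} (hM : M.PosSemidef) :
    msqrt M * msqrt M = M :=
  CFC.sqrt_mul_sqrt_self M (Matrix.nonneg_iff_posSemidef.mpr hM)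

end MSqrt

end Stmt5Aux

open Stmt5Aux

/-- For all positive `p`, `q` there is a constant `β_m > 0`, depending only
on `p` and `q`, such that for every matrix ellipsoid
`ℰ = {Z : ZᵀEZ + ZᵀF + FᵀZ + G ⪯ 0}` (with `E ≻ 0`, `G` symmetric,
`FᵀE⁻¹F − G ≻ 0`), the Lebesgue measure of `{vec(Z) : Z ∈ ℰ} ⊆ ℝ^{pq}` equals
`β_m (det(FᵀE⁻¹F − G))^{p/2} (det(E⁻¹))^{q/2}`. -/
theorem stmt5 (p q : ℕ) (hp : 0 < p) (hq : 0 < q) :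
    ∃ βm : ℝ, 0 < βm ∧
      ∀ (E : Matrix (Fin p) (Fin p) ℝ) (F : Matrix (Fin p) (Fin q) ℝ)
        (G : Matrix (Fin q) (Fin q) ℝ),
        G.IsHermitian → E.PosDef → (Fᵀ * E⁻¹ * F - G).PosDef →
        volume (vecMat ''
            {Z : Matrix (Fin p) (Fin q) ℝ |
              (-(Zᵀ * E * Z + Zᵀ * F + Fᵀ * Z + G)).PosSemidef}) =
          ENNReal.ofReal (βm * (Fᵀ * E⁻¹ * F - G).det ^ ((p : ℝ) / 2) *
            (E⁻¹).det ^ ((q : ℝ) / 2)) := by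
  classical
  set K := vecMat '' mBall p q with hK
  have hKpos : 0 < volume K := volume_image_pos hp hq
  have hKtop : volume K ≠ ⊤ := volume_image_lt_top.ne
  refine ⟨(volume K).toReal, ENNReal.toReal_pos hKpos.ne' hKtop, ?_⟩
  intro E F G hG hE hH
  set H := Fᵀ * E⁻¹ * F - G with hHdef
  have hEdet : IsUnit E.det := isUnit_iff_ne_zero.2 hE.det_pos.ne'
  have hHdet : IsUnit H.det := isUnit_iff_ne_zero.2 hH.det_pos.ne'
  set sE := msqrt E with hsE
  set sH := msqrt H with hsH
  have hsEsym : sEᵀ = sE := herm_transpose (msqrt_herm E)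
  have hsHsym : sHᵀ = sH := herm_transpose (msqrt_herm H)
  have hsEmul : sE * sE = E := msqrt_mul_self hE.posSemidef
  have hsHmul : sH * sH = H := msqrt_mul_self hH.posSemidef
  have hsEdet : IsUnit sE.det := by
    have : sE.det * sE.det = E.det := by rw [← Matrix.det_mul, hsEmul]
    exact isUnit_of_mul_isUnit_left (this ▸ hEdet)
  have hsHdet : IsUnit sH.det := by
    have : sH.det * sH.det = H.det := by rw [← Matrix.det_mul, hsHmul]
    exact isUnit_of_mul_isUnit_left (this ▸ hHdet)
  have hsEinvdet : IsUnit (sE⁻¹).det := Matrix.isUnit_nonsing_inv_det _ hsEdet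
  have hsHinvdet : IsUnit (sH⁻¹).det := Matrix.isUnit_nonsing_inv_det _ hsHdet
  have hET : Eᵀ = E := herm_transpose hE.isHermitian
  have hEinvT : (E⁻¹)ᵀ = E⁻¹ := by rw [Matrix.transpose_nonsing_inv, hET]
  have hsHinvT : (sH⁻¹)ᵀ = sH⁻¹ := by rw [Matrix.transpose_nonsing_inv, hsHsym]
  -- complete the square
  have hsq : ∀ Z : Matrix (Fin p) (Fin q) ℝ,
      -(Zᵀ * E * Z + Zᵀ * F + Fᵀ * Z + G)
        = H - (Z + E⁻¹ * F)ᵀ * E * (Z + E⁻¹ * F) := by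
    intro Z
    have h1 : (Z + E⁻¹ * F)ᵀ = Zᵀ + Fᵀ * E⁻¹ := by
      rw [Matrix.transpose_add, Matrix.transpose_mul, hEinvT]
    have hexp : (Z + E⁻¹ * F)ᵀ * E * (Z + E⁻¹ * F)
        = Zᵀ * E * Z + Zᵀ * F + Fᵀ * Z + Fᵀ * E⁻¹ * F := by
      rw [h1]
      simp only [Matrix.add_mul, Matrix.mul_add]
      have e1 : Fᵀ * E⁻¹ * E = Fᵀ := by
        rw [Matrix.mul_assoc, Matrix.nonsing_inv_mul _ hEdet, Matrix.mul_one]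
      have e2 : Zᵀ * E * (E⁻¹ * F) = Zᵀ * F := by
        rw [Matrix.mul_assoc, ← Matrix.mul_assoc E, Matrix.mul_nonsing_inv _ hEdet,
          Matrix.one_mul]
      rw [e1, e2, ← Matrix.mul_assoc Fᵀ E⁻¹ F]
      abel
    rw [hexp, hHdef]
    abel
  -- conjugation to the unit ball
  have hiff : ∀ Z : Matrix (Fin p) (Fin q) ℝ,
      (-(Zᵀ * E * Z + Zᵀ * F + Fᵀ * Z + G)).PosSemidef ↔
        sE * (Z + E⁻¹ * F) * sH⁻¹ ∈ mBall p q := by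
    intro Z
    rw [hsq Z]
    set Y := Z + E⁻¹ * F with hY
    have hconj : (sH⁻¹)ᵀ * (H - Yᵀ * E * Y) * sH⁻¹
        = 1 - (sE * Y * sH⁻¹)ᵀ * (sE * Y * sH⁻¹) := by
      rw [hsHinvT, Matrix.mul_sub, Matrix.sub_mul]
      congr 1
      · rw [← hsHmul, ← Matrix.mul_assoc, Matrix.nonsing_inv_mul _ hsHdet, Matrix.one_mul,
          Matrix.mul_nonsing_inv _ hsHdet]
      · rw [Matrix.transpose_mul, Matrix.transpose_mul, hsHinvT, hsEsym]
        rw [show sH⁻¹ * (Yᵀ * sE) * (sE * Y * sH⁻¹) = sH⁻¹ * (Yᵀ * (sE * sE) * Y) * sH⁻¹ by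
          simp only [Matrix.mul_assoc]]
        rw [hsEmul]
    have := posSemidef_conj_iff (H - Yᵀ * E * Y) (T := sH⁻¹) hsHinvdet
    rw [hconj] at this
    exact ⟨fun h => this.2 h, fun h => this.1 h⟩
  -- the ellipsoid is an affine image of the unit ball
  have hset : {Z : Matrix (Fin p) (Fin q) ℝ |
        (-(Zᵀ * E * Z + Zᵀ * F + Fᵀ * Z + G)).PosSemidef}
      = (fun W => sE⁻¹ * W * sH + -(E⁻¹ * F)) '' mBall p q := by
    ext Z
    simp only [Set.mem_setOf_eq, Set.mem_image]
    rw [hiff Z]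
    constructor
    · intro h
      refine ⟨sE * (Z + E⁻¹ * F) * sH⁻¹, h, ?_⟩
      rw [show sE⁻¹ * (sE * (Z + E⁻¹ * F) * sH⁻¹) * sH
            = (sE⁻¹ * sE) * (Z + E⁻¹ * F) * (sH⁻¹ * sH) by simp only [Matrix.mul_assoc]]
      rw [Matrix.nonsing_inv_mul _ hsEdet, Matrix.nonsing_inv_mul _ hsHdet,
        Matrix.one_mul, Matrix.mul_one]
      abel
    · rintro ⟨W, hW, rfl⟩
      have : sE * (sE⁻¹ * W * sH + -(E⁻¹ * F) + E⁻¹ * F) * sH⁻¹ = W := by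
        rw [show sE⁻¹ * W * sH + -(E⁻¹ * F) + E⁻¹ * F = sE⁻¹ * W * sH by abel]
        rw [show sE * (sE⁻¹ * W * sH) * sH⁻¹ = (sE * sE⁻¹) * W * (sH * sH⁻¹) by
          simp only [Matrix.mul_assoc]]
        rw [Matrix.mul_nonsing_inv _ hsEdet, Matrix.mul_nonsing_inv _ hsHdet,
          Matrix.one_mul, Matrix.mul_one]
      rw [this]
      exact hW
  -- vectorize
  have himg : vecMat '' {Z : Matrix (Fin p) (Fin q) ℝ |
        (-(Zᵀ * E * Z + Zᵀ * F + Fᵀ * Z + G)).PosSemidef}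
      = vecMat (-(E⁻¹ * F)) +ᵥ (Matrix.toLin' (kronMat sE⁻¹ sH) '' K) := by
    rw [hset, Set.image_image, ← Set.image_vadd, hK, Set.image_image, Set.image_image]
    apply Set.image_congr
    intro W _
    rw [vecMat_add, vecMat_mul_mul]
    simp only [vadd_eq_add, Matrix.toLin'_apply]
    funext k
    simp [add_comm]
  rw [himg, measure_vadd, Measure.addHaar_image_linearMap, LinearMap.det_toLin', det_kronMat]
  -- arithmetic
  have hdE : (0:ℝ) < E.det := hE.det_pos
  have hdH : (0:ℝ) < H.det := hH.det_pos
  have hdEinv : (E⁻¹).det = E.det⁻¹ := by rw [Matrix.det_nonsing_inv, Ring.inverse_eq_inv]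
  have habsH : |sH.det| = Real.sqrt H.det := by
    rw [← Real.sqrt_sq_eq_abs]
    congr 1
    rw [sq, ← Matrix.det_mul, hsHmul]
  have habsE : |sE.det| = Real.sqrt E.det := by
    rw [← Real.sqrt_sq_eq_abs]
    congr 1
    rw [sq, ← Matrix.det_mul, hsEmul]
  have habsEinv : |(sE⁻¹).det| = Real.sqrt ((E⁻¹).det) := by
    rw [Matrix.det_nonsing_inv, Ring.inverse_eq_inv, abs_inv, habsE, hdEinv, Real.sqrt_inv]
  have hrpowH : H.det ^ ((p : ℝ) / 2) = Real.sqrt H.det ^ p := by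
    rw [Real.sqrt_eq_rpow, ← Real.rpow_natCast (H.det ^ (1 / (2:ℝ))) p,
      ← Real.rpow_mul hdH.le]
    congr 1
    push_cast; ring
  have hrpowE : (E⁻¹).det ^ ((q : ℝ) / 2) = Real.sqrt ((E⁻¹).det) ^ q := by
    have hdEinv0 : (0:ℝ) ≤ (E⁻¹).det := by rw [hdEinv]; positivity
    rw [Real.sqrt_eq_rpow, ← Real.rpow_natCast ((E⁻¹).det ^ (1 / (2:ℝ))) q,
      ← Real.rpow_mul hdEinv0]
    congr 1
    push_cast; ring
  rw [show volume K = ENNReal.ofReal ((volume K).toReal) from (ENNReal.ofReal_toReal hKtop).symm]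
  rw [← ENNReal.ofReal_mul (abs_nonneg _)]
  congr 1
  rw [abs_mul, abs_pow, abs_pow, habsH, habsEinv, hrpowH, hrpowE,
    ENNReal.toReal_ofReal ENNReal.toReal_nonneg]
  ring
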